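/- A finite set S of positive integers is an admissible pinnacle set if and only if for every s ∈ S, the number of elements of S that are ≤ s is less than s/2 (equivalently, writing S = {s_1 < ... < s_d}, one has s_i > 2i for all i). -/

import Mathlib

set_option maxHeartbeats 1000000

open Finset

/-- `i` is a peak of the permutation `w` of `{1,…,n}` (represented on `Fin n`):
`0 < i < n-1` (0-indexed) and `w(i-1) < w(i) > w(i+1)`. -/
def IsPeak {n : ℕ} (w : Equiv.Perm (Fin n)) (i : Fin n) : Prop :=
  0 < i.val ∧ ∃ h : i.val + 1 < n,
    w ⟨i.val - 1, Nat.lt_of_le_of_lt (Nat.sub_le _ _) i.isLt⟩ < w i ∧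
    w ⟨i.val + 1, h⟩ < w i

/-- The pinnacle set of `w`, as a set of values in `{1,…,n}`. -/
def Pin {n : ℕ} (w : Equiv.Perm (Fin n)) : Set ℕ :=
  {v | ∃ i : Fin n, IsPeak w i ∧ v = (w i).val + 1}

/-- `p_S(n)`: the number of permutations in `S_n` with pinnacle set `S`. -/
noncomputable def pcount (n : ℕ) (S : Set ℕ) : ℕ :=
  Nat.card {w : Equiv.Perm (Fin n) // Pin w = S}

/-- `S` is an admissible pinnacle set. -/
def Admissible (S : Finset ℕ) : Prop :=
  ∃ (n : ℕ) (w : Equiv.Perm (Fin n)), Pin w = ↑S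

lemma orderEmb_lt_iff (A : Finset ℕ) {N : ℕ} (hA : A.card = N) (c : ℕ) (k : Fin N) :
    A.orderEmbOfFin hA k < c ↔ (k : ℕ) < (A.filter (· < c)).card := by
  classical
  set e : Fin N → ℕ := fun j => A.orderEmbOfFin hA j with he
  have hmono : StrictMono e := (A.orderEmbOfFin hA).strictMono
  have hrange : ∀ a, a ∈ A ↔ ∃ j, e j = a := by
    intro a
    rw [← Finset.mem_coe, ← A.range_orderEmbOfFin hA]
    exact Iff.rfl
  set D : Finset (Fin N) := univ.filter (fun j : Fin N => e j < c) with hD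
  have himg : A.filter (· < c) = D.image e := by
    ext a
    simp only [mem_filter, mem_image, hD, mem_univ, true_and]
    constructor
    · rintro ⟨ha, hac⟩
      obtain ⟨j, hj⟩ := (hrange a).1 ha
      exact ⟨j, by rw [hj]; exact hac, hj⟩
    · rintro ⟨j, hjc, hj⟩
      exact ⟨(hrange a).2 ⟨j, hj⟩, hj ▸ hjc⟩
  have hcard : (A.filter (· < c)).card = D.card := by
    rw [himg, card_image_of_injective _ hmono.injective]
  rw [hcard]
  constructor
  · intro h
    have hsub : Finset.Iic k ⊆ D := by
      intro j hj
      simp only [hD, mem_filter, mem_univ, true_and]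
      exact lt_of_le_of_lt (hmono.monotone (mem_Iic.1 hj)) h
    have := card_le_card hsub
    rw [Fin.card_Iic] at this
    omega
  · intro h
    by_contra hc
    push_neg at hc
    have hsub : D ⊆ Finset.Iio k := by
      intro j hj
      simp only [hD, mem_filter, mem_univ, true_and] at hj
      rw [mem_Iio]
      by_contra hjk
      push_neg at hjk
      exact absurd (lt_of_lt_of_le hj hc) (not_lt.2 (hmono.monotone hjk))
    have := card_le_card hsub
    rw [Fin.card_Iio] at this
    omega

lemma pin_construct {n d : ℕ} (hd : 0 < d) (hn : 2 * d < n)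
    (s : Fin d → ℕ) (t : Fin (n - d) → ℕ)
    (hs : StrictMono s) (ht : StrictMono t)
    (hs1 : ∀ j, 1 ≤ s j) (hsn : ∀ j, s j ≤ n)
    (ht1 : ∀ k, 1 ≤ t k)
    (hst : ∀ j k, s j ≠ t k)
    (hts : ∀ (j : Fin d) (k : Fin (n - d)), (k : ℕ) ≤ (j : ℕ) + 1 → t k < s j)
    (htop : ∀ k, t k < n)
    (hstop : s ⟨d - 1, by omega⟩ = n) :
    ∃ w : Equiv.Perm (Fin n), Pin w = {v | ∃ j, v = s j} := by
  classical
  have hnd : d < n - d := by omega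
  let f : Fin n → ℕ := fun i =>
    if h2 : i.val < 2 * d then
      if i.val % 2 = 1 then s ⟨i.val / 2, by omega⟩ else t ⟨i.val / 2, by omega⟩
    else t ⟨n + d - 1 - i.val, by have := i.isLt; omega⟩
  have hf_odd : ∀ (k : ℕ) (hk : k < d) (i : Fin n), i.val = 2 * k + 1 → f i = s ⟨k, hk⟩ := by
    intro k hk i hi
    simp only [f]
    rw [dif_pos (by omega), if_pos (by omega)]
    congr 1
    exact Fin.ext (by simp; omega)
  have hf_even : ∀ (k : ℕ) (hk : k < n - d) (i : Fin n), k < d → i.val = 2 * k →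
      f i = t ⟨k, hk⟩ := by
    intro k hk i hkd hi
    simp only [f]
    rw [dif_pos (by omega), if_neg (by omega)]
    congr 1
    exact Fin.ext (by simp; omega)
  have hf_tail : ∀ (k : ℕ) (hk : k < n - d) (i : Fin n), d ≤ k → i.val = n + d - 1 - k →
      f i = t ⟨k, hk⟩ := by
    intro k hk i hkd hi
    have hiv : ¬ i.val < 2 * d := by omega
    simp only [f]
    rw [dif_neg hiv]
    congr 1
    exact Fin.ext (by simp; omega)
  have hf_cases : ∀ i : Fin n, (∃ j, f i = s j) ∨ (∃ k, f i = t k) := by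
    intro i
    simp only [f]
    split_ifs with h1 h2
    · exact Or.inl ⟨_, rfl⟩
    · exact Or.inr ⟨_, rfl⟩
    · exact Or.inr ⟨_, rfl⟩
  have hf1 : ∀ i, 1 ≤ f i := by
    intro i
    rcases hf_cases i with ⟨j, hj⟩ | ⟨k, hk⟩
    · rw [hj]; exact hs1 j
    · rw [hk]; exact ht1 k
  have hfn : ∀ i, f i ≤ n := by
    intro i
    rcases hf_cases i with ⟨j, hj⟩ | ⟨k, hk⟩
    · rw [hj]; exact hsn j
    · rw [hk]; exact (htop k).le
  -- injectivity
  have hfinj : Function.Injective f := by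
    intro i i' heq
    have hi := i.isLt
    have hi' := i'.isLt
    apply Fin.ext
    by_cases h1 : i.val < 2 * d <;> by_cases h1' : i'.val < 2 * d
    · by_cases h2 : i.val % 2 = 1 <;> by_cases h2' : i'.val % 2 = 1
      · rw [hf_odd (i.val / 2) (by omega) i (by omega),
          hf_odd (i'.val / 2) (by omega) i' (by omega)] at heq
        have := hs.injective heq
        have : i.val / 2 = i'.val / 2 := by simpa using congrArg Fin.val this
        omega
      · rw [hf_odd (i.val / 2) (by omega) i (by omega),
          hf_even (i'.val / 2) (by omega) i' (by omega) (by omega)] at heq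
        exact absurd heq (hst _ _)
      · rw [hf_even (i.val / 2) (by omega) i (by omega) (by omega),
          hf_odd (i'.val / 2) (by omega) i' (by omega)] at heq
        exact absurd heq.symm (hst _ _)
      · rw [hf_even (i.val / 2) (by omega) i (by omega) (by omega),
          hf_even (i'.val / 2) (by omega) i' (by omega) (by omega)] at heq
        have := ht.injective heq
        have : i.val / 2 = i'.val / 2 := by simpa using congrArg Fin.val this
        omega
    · by_cases h2 : i.val % 2 = 1
      · rw [hf_odd (i.val / 2) (by omega) i (by omega),
          hf_tail (n + d - 1 - i'.val) (by omega) i' (by omega) (by omega)] at heq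
        exact absurd heq (hst _ _)
      · rw [hf_even (i.val / 2) (by omega) i (by omega) (by omega),
          hf_tail (n + d - 1 - i'.val) (by omega) i' (by omega) (by omega)] at heq
        have := ht.injective heq
        have : i.val / 2 = n + d - 1 - i'.val := by simpa using congrArg Fin.val this
        omega
    · by_cases h2' : i'.val % 2 = 1
      · rw [hf_tail (n + d - 1 - i.val) (by omega) i (by omega) (by omega),
          hf_odd (i'.val / 2) (by omega) i' (by omega)] at heq
        exact absurd heq.symm (hst _ _)
      · rw [hf_tail (n + d - 1 - i.val) (by omega) i (by omega) (by omega),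
          hf_even (i'.val / 2) (by omega) i' (by omega) (by omega)] at heq
        have := ht.injective heq
        have : n + d - 1 - i.val = i'.val / 2 := by simpa using congrArg Fin.val this
        omega
    · rw [hf_tail (n + d - 1 - i.val) (by omega) i (by omega) (by omega),
        hf_tail (n + d - 1 - i'.val) (by omega) i' (by omega) (by omega)] at heq
      have := ht.injective heq
      have : n + d - 1 - i.val = n + d - 1 - i'.val := by simpa using congrArg Fin.val this
      omega
  let g : Fin n → Fin n := fun i => ⟨f i - 1, by have := hf1 i; have := hfn i; omega⟩
  have hginj : Function.Injective g := by
    intro i i' h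
    have hv : f i - 1 = f i' - 1 := congrArg Fin.val h
    have := hf1 i; have := hf1 i'
    exact hfinj (by omega)
  let w : Equiv.Perm (Fin n) := Equiv.ofBijective g (Finite.injective_iff_bijective.1 hginj)
  have hw : ∀ i, w i = g i := fun i => rfl
  have hwval : ∀ i, (w i).val + 1 = f i := by
    intro i
    rw [hw]
    have := hf1 i
    simp only [g]
    omega
  have hlt : ∀ i i', w i < w i' ↔ f i < f i' := by
    intro i i'
    rw [hw, hw]
    simp only [g, Fin.lt_def]
    have := hf1 i; have := hf1 i'
    omega
  refine ⟨w, ?_⟩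
  have hpeakA : ∀ (k : ℕ) (hk : k < d), IsPeak w ⟨2 * k + 1, by omega⟩ := by
    intro k hk
    refine ⟨Nat.succ_pos _, ⟨by show 2 * k + 1 + 1 < n; omega, ?_, ?_⟩⟩
    · show w ⟨2 * k, by omega⟩ < w ⟨2 * k + 1, by omega⟩
      rw [hlt]
      have e1 : f ⟨2 * k, by omega⟩ = t ⟨k, by omega⟩ :=
        hf_even k (by omega) ⟨2 * k, by omega⟩ hk rfl
      have e2 : f ⟨2 * k + 1, by omega⟩ = s ⟨k, hk⟩ :=
        hf_odd k hk ⟨2 * k + 1, by omega⟩ rfl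
      rw [e1, e2]
      exact hts ⟨k, hk⟩ ⟨k, by omega⟩ (by simp)
    · show w ⟨2 * k + 1 + 1, by omega⟩ < w ⟨2 * k + 1, by omega⟩
      rw [hlt]
      have e2 : f ⟨2 * k + 1, by omega⟩ = s ⟨k, hk⟩ :=
        hf_odd k hk ⟨2 * k + 1, by omega⟩ rfl
      rw [e2]
      by_cases hk1 : k + 1 < d
      · have e3 : f ⟨2 * k + 1 + 1, by omega⟩ = t ⟨k + 1, by omega⟩ :=
          hf_even (k + 1) (by omega) ⟨2 * k + 1 + 1, by omega⟩ hk1 (by simp; ring)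
        rw [e3]
        exact hts ⟨k, hk⟩ ⟨k + 1, by omega⟩ (by simp)
      · have hkd : k = d - 1 := by omega
        subst hkd
        have e3 : f ⟨2 * (d - 1) + 1 + 1, by omega⟩ = t ⟨n - d - 1, by omega⟩ :=
          hf_tail (n - d - 1) (by omega) ⟨2 * (d - 1) + 1 + 1, by omega⟩ (by omega)
            (by simp; omega)
        rw [e3]
        exact lt_of_lt_of_le (htop _) hstop.ge
  have hpeakB : ∀ i : Fin n, IsPeak w i → i.val % 2 = 1 ∧ i.val < 2 * d := by
    rintro i ⟨hi0, hilt, hleft, hright⟩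
    have hi := i.isLt
    by_contra hcon
    rw [hlt] at hleft
    by_cases h1 : i.val < 2 * d
    · -- even position, 0 < i.val
      have hodd : ¬ (i.val % 2 = 1) := fun h => hcon ⟨h, h1⟩
      have hk0 : 0 < i.val / 2 := by omega
      have e1 : f i = t ⟨i.val / 2, by omega⟩ :=
        hf_even (i.val / 2) (by omega) i (by omega) (by omega)
      have e2 : f ⟨i.val - 1, Nat.lt_of_le_of_lt (Nat.sub_le _ _) i.isLt⟩ =
          s ⟨i.val / 2 - 1, by omega⟩ :=
        hf_odd (i.val / 2 - 1) (by omega) _ (by simp; omega)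
      rw [e1, e2] at hleft
      have := hts ⟨i.val / 2 - 1, by omega⟩ ⟨i.val / 2, by omega⟩ (by simp; omega)
      exact absurd hleft (not_lt.2 this.le)
    · -- tail position
      have e1 : f i = t ⟨n + d - 1 - i.val, by omega⟩ :=
        hf_tail (n + d - 1 - i.val) (by omega) i (by omega) (by omega)
      rw [e1] at hleft
      by_cases h2 : i.val = 2 * d
      · have e2 : f ⟨i.val - 1, Nat.lt_of_le_of_lt (Nat.sub_le _ _) i.isLt⟩ =
            s ⟨d - 1, by omega⟩ :=
          hf_odd (d - 1) (by omega) _ (by simp; omega)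
        rw [e2] at hleft
        exact absurd hleft (not_lt.2 ((htop _).le.trans hstop.ge))
      · have e2 : f ⟨i.val - 1, Nat.lt_of_le_of_lt (Nat.sub_le _ _) i.isLt⟩ =
            t ⟨n + d - i.val, by omega⟩ :=
          hf_tail (n + d - i.val) (by omega) _ (by omega) (by simp; omega)
        rw [e2] at hleft
        have hmon : t ⟨n + d - 1 - i.val, by omega⟩ ≤ t ⟨n + d - i.val, by omega⟩ :=
          ht.monotone (by simp [Fin.le_def]; omega)
        exact absurd hleft (not_lt.2 hmon)
  ext v
  simp only [Pin, Set.mem_setOf_eq]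
  constructor
  · rintro ⟨i, hpk, hv⟩
    obtain ⟨hodd, hlt2d⟩ := hpeakB i hpk
    refine ⟨⟨i.val / 2, by omega⟩, ?_⟩
    rw [hv, hwval, hf_odd (i.val / 2) (by omega) i (by omega)]
  · rintro ⟨j, rfl⟩
    refine ⟨⟨2 * j.val + 1, by omega⟩, hpeakA j.val j.isLt, ?_⟩
    have e : f ⟨2 * j.val + 1, by omega⟩ = s ⟨j.val, j.isLt⟩ :=
      hf_odd j.val j.isLt ⟨2 * j.val + 1, by omega⟩ rfl
    rw [hwval, e]

theorem admissible_iff (S : Finset ℕ) (hpos : ∀ s ∈ S, 0 < s) :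
    Admissible S ↔ ∀ s ∈ S, 2 * (S.filter (· ≤ s)).card < s := by
  classical
  constructor
  · rintro ⟨n, w, hw⟩ s hs
    -- the set of peaks with value ≤ s
    set P : Finset (Fin n) :=
      univ.filter (fun i : Fin n => IsPeak w i ∧ (w i).val + 1 ≤ s) with hP
    have hmemP : ∀ i, i ∈ P ↔ IsPeak w i ∧ (w i).val + 1 ≤ s := by
      intro i; simp [hP]
    -- card equality
    have hcardeq : (S.filter (· ≤ s)).card = P.card := by
      symm
      apply Finset.card_bij (fun (i : Fin n) (_ : i ∈ P) => (w i).val + 1)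
      · intro i hi
        rw [hmemP] at hi
        rw [mem_filter]
        have : ((w i).val + 1) ∈ Pin w := ⟨i, hi.1, rfl⟩
        rw [hw] at this
        exact ⟨this, hi.2⟩
      · intro i hi i' hi' h
        have : w i = w i' := Fin.ext (by omega)
        exact w.injective this
      · intro v hv
        rw [mem_filter] at hv
        have : v ∈ Pin w := by rw [hw]; exact_mod_cast hv.1
        obtain ⟨i, hpk, hvi⟩ := this
        exact ⟨i, (hmemP i).2 ⟨hpk, by omega⟩, hvi.symm⟩
    -- s itself is a peak value
    have hsPin : s ∈ Pin w := by rw [hw]; exact_mod_cast hs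
    obtain ⟨p0, hp0pk, hp0v⟩ := hsPin
    have hp0 : p0 ∈ P := (hmemP p0).2 ⟨hp0pk, by omega⟩
    have hPne : P.Nonempty := ⟨p0, hp0⟩
    -- predecessor map
    have hvalpos : ∀ p ∈ P, 0 < p.val := fun p hp => ((hmemP p).1 hp).1.1
    let pr : Fin n → Fin n := fun p => ⟨p.val - 1, Nat.lt_of_le_of_lt (Nat.sub_le _ _) p.isLt⟩
    set q := P.max' hPne with hq
    have hqP : q ∈ P := P.max'_mem hPne
    obtain ⟨hq0, hq1, hqleft, hqright⟩ := ((hmemP q).1 hqP).1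
    let qs : Fin n := ⟨q.val + 1, hq1⟩
    set B : Finset (Fin n) := insert qs (P ∪ P.image pr) with hB
    have hprinj : Set.InjOn pr P := by
      intro p hp p' hp' h
      have h1 := hvalpos p hp
      have h2 := hvalpos p' hp'
      have : p.val - 1 = p'.val - 1 := congrArg Fin.val h
      exact Fin.ext (by omega)
    have hdisj : Disjoint P (P.image pr) := by
      rw [Finset.disjoint_left]
      intro x hx hx'
      obtain ⟨p, hp, hpx⟩ := Finset.mem_image.1 hx'
      have hppos := hvalpos p hp
      have hxval : x.val = p.val - 1 := by rw [← hpx]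
      obtain ⟨hx0, hx1, hxl, hxr⟩ := ((hmemP x).1 hx).1
      obtain ⟨hp0', hp1', hpl, hpr'⟩ := ((hmemP p).1 hp).1
      -- w x > w (x+1) = w p and w p > w (x) : contradiction
      have hxp : x.val + 1 = p.val := by omega
      have h1 : w ⟨x.val + 1, hx1⟩ < w x := hxr
      have h2 : w ⟨p.val - 1, Nat.lt_of_le_of_lt (Nat.sub_le _ _) p.isLt⟩ < w p := hpl
      have e1 : (⟨x.val + 1, hx1⟩ : Fin n) = p := Fin.ext (by show x.val + 1 = p.val; omega)
      have e2 : (⟨p.val - 1, Nat.lt_of_le_of_lt (Nat.sub_le _ _) p.isLt⟩ : Fin n) = x :=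
        Fin.ext (by show p.val - 1 = x.val; omega)
      rw [e1] at h1
      rw [e2] at h2
      exact absurd h1 (not_lt.2 h2.le)
    have hqs_notin : qs ∉ P ∪ P.image pr := by
      intro hmem
      rcases Finset.mem_union.1 hmem with h | h
      · have := P.le_max' qs h
        rw [← hq] at this
        have : qs.val ≤ q.val := this
        simp only [qs] at this
        omega
      · obtain ⟨p, hp, hpx⟩ := Finset.mem_image.1 h
        have := P.le_max' p hp
        rw [← hq] at this
        have h1 : p.val ≤ q.val := this
        have h2 : p.val - 1 = qs.val := congrArg Fin.val hpx
        have := hvalpos p hp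
        simp only [qs] at h2
        omega
    have hcardB : B.card = 2 * P.card + 1 := by
      rw [hB, Finset.card_insert_of_notMem hqs_notin,
        Finset.card_union_of_disjoint hdisj, Finset.card_image_of_injOn hprinj]
      ring
    -- all values at positions in B are < s
    have hBval : ∀ j ∈ B, (w j).val < s := by
      intro j hj
      rw [hB, Finset.mem_insert] at hj
      rcases hj with rfl | hj
      · have h1 : w qs < w q := hqright
        have h2 : (w q).val + 1 ≤ s := ((hmemP q).1 hqP).2
        have := Fin.lt_def.1 h1
        omega
      · rcases Finset.mem_union.1 hj with h | h
        · have := ((hmemP j).1 h).2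
          omega
        · obtain ⟨p, hp, hpx⟩ := Finset.mem_image.1 h
          obtain ⟨hp0', hp1', hpl, hpr'⟩ := ((hmemP p).1 hp).1
          have h2 : (w p).val + 1 ≤ s := ((hmemP p).1 hp).2
          have e2 : (⟨p.val - 1, Nat.lt_of_le_of_lt (Nat.sub_le _ _) p.isLt⟩ : Fin n) = j :=
            hpx
          rw [e2] at hpl
          have := Fin.lt_def.1 hpl
          omega
    -- injection into range s
    have hcardle : B.card ≤ s := by
      have : B.card ≤ (Finset.range s).card := by
        apply Finset.card_le_card_of_injOn (fun j => (w j).val)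
        · intro j hj
          rw [Finset.mem_coe, Finset.mem_range]
          exact hBval j hj
        · intro j hj j' hj' h
          exact w.injective (Fin.ext h)
      simpa using this
    rw [hcardeq]
    omega
  · intro hyp
    rcases S.eq_empty_or_nonempty with rfl | hne
    · refine ⟨0, Equiv.refl _, ?_⟩
      ext v
      constructor
      · rintro ⟨i, _⟩; exact i.elim0
      · intro h; simp at h
    · set d := S.card with hd
      have hdpos : 0 < d := Finset.card_pos.2 hne
      set n := S.max' hne with hn
      have hSicc : ∀ a ∈ S, a ∈ Finset.Icc 1 n := by
        intro a ha
        rw [mem_Icc]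
        exact ⟨hpos a ha, S.le_max' a ha⟩
      have hnS : n ∈ S := S.max'_mem hne
      have h2dn : 2 * d < n := by
        have := hyp n hnS
        have hfe : S.filter (· ≤ n) = S := by
          apply Finset.filter_true_of_mem
          intro a ha
          exact S.le_max' a ha
        rw [hfe] at this
        omega
      set T : Finset ℕ := Finset.Icc 1 n \ S with hT
      have hTcard : T.card = n - d := by
        rw [hT, Finset.card_sdiff_of_subset (fun a ha => hSicc a ha), Nat.card_Icc]
        simp [hd]
      set s : Fin d → ℕ := fun j => S.orderEmbOfFin rfl j with hsdef
      set t : Fin (n - d) → ℕ := fun k => T.orderEmbOfFin hTcard k with htdef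
      have hsmem : ∀ j, s j ∈ S := fun j => S.orderEmbOfFin_mem rfl j
      have htmem : ∀ k, t k ∈ T := fun k => T.orderEmbOfFin_mem hTcard k
      have hsmono : StrictMono s := (S.orderEmbOfFin rfl).strictMono
      have htmono : StrictMono t := (T.orderEmbOfFin hTcard).strictMono
      have ht1 : ∀ k, 1 ≤ t k := by
        intro k
        have := htmem k
        rw [hT, Finset.mem_sdiff, mem_Icc] at this
        exact this.1.1
      have htop : ∀ k, t k < n := by
        intro k
        have := htmem k
        rw [hT, Finset.mem_sdiff, mem_Icc] at this
        have h1 : t k ≤ n := this.1.2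
        have h2 : t k ∉ S := this.2
        rcases lt_or_eq_of_le h1 with h | h
        · exact h
        · exact absurd (h ▸ hnS) h2
      have hst : ∀ j k, s j ≠ t k := by
        intro j k h
        have h1 := hsmem j
        have h2 := htmem k
        rw [hT, Finset.mem_sdiff] at h2
        exact h2.2 (h ▸ h1)
      have hs1 : ∀ j, 1 ≤ s j := fun j => hpos _ (hsmem j)
      have hsn : ∀ j, s j ≤ n := fun j => S.le_max' _ (hsmem j)
      -- counting
      have hScount : ∀ j : Fin d, (S.filter (· < s j)).card = (j : ℕ) := by
        intro j
        set m := (S.filter (· < s j)).card with hm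
        have hiff : ∀ k : Fin d, s k < s j ↔ (k : ℕ) < m := by
          intro k
          exact orderEmb_lt_iff S rfl (s j) k
        have hmle : m ≤ d := le_trans (Finset.card_le_card (Finset.filter_subset _ _)) (le_of_eq hd.symm)
        by_contra hne'
        rcases Nat.lt_or_ge m (j : ℕ) with h | h
        · have hmd : m < d := lt_trans h j.isLt
          have h2 := (hiff ⟨m, hmd⟩).1 (hsmono (by rw [Fin.lt_def]; exact h))
          rw [Fin.val_mk] at h2
          exact absurd h2 (lt_irrefl m)
        · have hj : (j : ℕ) < m := by omega
          have := (hiff j).2 hj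
          exact absurd this (lt_irrefl _)
      have hScount' : ∀ j : Fin d, (S.filter (· ≤ s j)).card = (j : ℕ) + 1 := by
        intro j
        have he : S.filter (· ≤ s j) = insert (s j) (S.filter (· < s j)) := by
          ext x
          simp only [mem_filter, Finset.mem_insert]
          constructor
          · rintro ⟨hx, hle⟩
            rcases eq_or_lt_of_le hle with h | h
            · exact Or.inl h
            · exact Or.inr ⟨hx, h⟩
          · rintro (rfl | ⟨hx, h⟩)
            · exact ⟨hsmem j, le_refl _⟩
            · exact ⟨hx, h.le⟩
        rw [he, Finset.card_insert_of_notMem (by simp), hScount]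
      have hsgt : ∀ j : Fin d, 2 * ((j : ℕ) + 1) < s j := by
        intro j
        have := hyp (s j) (hsmem j)
        rw [hScount' j] at this
        exact this
      have hTcount : ∀ j : Fin d, (T.filter (· < s j)).card = s j - 1 - (j : ℕ) := by
        intro j
        have hIcc : (Finset.Icc 1 n).filter (· < s j) = Finset.Icc 1 (s j - 1) := by
          ext x
          simp only [mem_filter, mem_Icc]
          have := hs1 j
          have := hsn j
          omega
        have hsplit : T.filter (· < s j) =
            (Finset.Icc 1 n).filter (· < s j) \ S.filter (· < s j) := by
          ext x
          simp only [hT, mem_filter, Finset.mem_sdiff, mem_Icc]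
          tauto
        have hsub : S.filter (· < s j) ⊆ (Finset.Icc 1 n).filter (· < s j) := by
          intro x hx
          rw [mem_filter] at hx ⊢
          exact ⟨hSicc x hx.1, hx.2⟩
        rw [hsplit, Finset.card_sdiff_of_subset hsub, hIcc, hScount, Nat.card_Icc]
        simp
      have hts : ∀ (j : Fin d) (k : Fin (n - d)), (k : ℕ) ≤ (j : ℕ) + 1 → t k < s j := by
        intro j k hk
        rw [htdef]
        rw [show (fun k => T.orderEmbOfFin hTcard k) k = T.orderEmbOfFin hTcard k from rfl]
        rw [orderEmb_lt_iff T hTcard (s j) k, hTcount]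
        have := hsgt j
        omega
      have hstop : s ⟨d - 1, by omega⟩ = n := by
        rw [hsdef]
        exact S.orderEmbOfFin_last rfl hdpos
      obtain ⟨w, hwpin⟩ := pin_construct hdpos h2dn s t hsmono htmono hs1 hsn ht1 hst hts htop hstop
      refine ⟨n, w, ?_⟩
      rw [hwpin]
      ext v
      simp only [Set.mem_setOf_eq, Finset.coe_sort_coe, Finset.mem_coe]
      constructor
      · rintro ⟨j, rfl⟩; exact hsmem j
      · intro hv
        have : v ∈ Set.range (S.orderEmbOfFin rfl) := by
          rw [S.range_orderEmbOfFin rfl]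
          exact_mod_cast hv
        obtain ⟨j, hj⟩ := this
        exact ⟨j, hj.symm⟩
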